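/- Let K,κ₀,k>0, δ>1, ε∈[0,1], p>0, β∈[0,1) and suppose z_p*(β)>0 satisfies Kα(ε,p)(1+β)(z_p*)^{1-ε} = -κ₀ + k(δ-1)(z_p*)^δ with α(ε,p)=1-ε-(2-ε)/(2(p+1)). Define V^p(β)=(K(1+β)/2)(z_p*(β))^{-ε} - (κ₀ + k(z_p*(β))^δ)/z_p*(β). If either 2p-2pε-ε≤0, or 2p-2pε-ε>0 and p(2-ε)/((p+1)(δ+ε-1))≤1, then (d/dβ)V^p(β) ≥ 0, i.e. the equilibrium worker value is nondecreasing in β. -/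

import Mathlib

set_option maxHeartbeats 1000000 in
/-- The partnership equilibrium worker value is nondecreasing in β
(Proposition 2 of the paper): its derivative in β is nonnegative. -/
theorem partnership_value_monotone_in_beta
    (K κ₀ k δ ε p : ℝ) (hK : 0 < K) (hκ : 0 < κ₀) (hk : 0 < k)
    (hδ : 1 < δ) (hε : ε ∈ Set.Icc (0:ℝ) 1) (hp : 0 < p)
    (hcase : 2 * p - 2 * p * ε - ε ≤ 0 ∨
      (0 < 2 * p - 2 * p * ε - ε ∧ p * (2 - ε) / ((p + 1) * (δ + ε - 1)) ≤ 1))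
    (zp : ℝ → ℝ)
    (hdiff : ∀ β ∈ Set.Ico (0:ℝ) 1, DifferentiableAt ℝ zp β)
    (hzp : ∀ β ∈ Set.Ico (0:ℝ) 1, 0 < zp β ∧
      K * (1 - ε - (2 - ε) / (2 * (p + 1))) * (1 + β) * (zp β) ^ (1 - ε)
        = -κ₀ + k * (δ - 1) * (zp β) ^ δ) :
    ∀ β ∈ Set.Ico (0:ℝ) 1,
      0 ≤ deriv (fun b : ℝ =>
        K * (1 + b) / 2 * (zp b) ^ (-ε) - (κ₀ + k * (zp b) ^ δ) / zp b) β := by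
  obtain ⟨hε0, hε1⟩ := hε
  intro β hβ
  obtain ⟨hβ0, hβ1⟩ := hβ
  obtain ⟨hz, heq⟩ := hzp β ⟨hβ0, hβ1⟩
  have hzd := hdiff β ⟨hβ0, hβ1⟩
  set z := zp β with hzdef
  set z' := deriv zp β with hz'def
  have hzp' : HasDerivAt zp z' β := hzd.hasDerivAt
  have hne : z ≠ 0 := hz.ne'
  -- derivative building blocks
  have hA' : HasDerivAt (fun b => zp b ^ (1-ε)) (z' * (1-ε) * z ^ (1-ε-1)) β :=
    hzp'.rpow_const (Or.inl hne)
  have hB' : HasDerivAt (fun b => zp b ^ δ) (z' * δ * z ^ (δ-1)) β :=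
    hzp'.rpow_const (Or.inl hne)
  have hN' : HasDerivAt (fun b => zp b ^ (-ε)) (z' * (-ε) * z ^ (-ε-1)) β :=
    hzp'.rpow_const (Or.inl hne)
  have h1 : HasDerivAt (fun b : ℝ => K * (1 + b) / 2) (K / 2) β := by
    have := (((hasDerivAt_id β).const_add (1:ℝ)).const_mul K).div_const 2
    simpa using this
  have hF : HasDerivAt (fun b : ℝ =>
      K * (1 + b) / 2 * (zp b) ^ (-ε) - (κ₀ + k * (zp b) ^ δ) / zp b)
      (K / 2 * z ^ (-ε) + K * (1 + β) / 2 * (z' * (-ε) * z ^ (-ε-1)) -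
        ((k * (z' * δ * z ^ (δ-1))) * z - (κ₀ + k * z ^ δ) * z') / z ^ 2) β :=
    (h1.mul hN').sub (((hB'.const_mul k).const_add κ₀).div hzp' hne)
  -- implicit differentiation of the equilibrium condition
  have hα : (1 : ℝ) - ε - (2 - ε) / (2 * (p + 1)) = (2*p - 2*p*ε - ε) / (2*(p+1)) := by
    field_simp; ring
  have hG : HasDerivAt (fun b : ℝ =>
      K * (1 - ε - (2 - ε) / (2 * (p + 1))) * (1 + b) * (zp b) ^ (1 - ε)
        - (-κ₀ + k * (δ - 1) * (zp b) ^ δ))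
      (K * (1 - ε - (2 - ε) / (2 * (p + 1))) * z ^ (1-ε)
        + K * (1 - ε - (2 - ε) / (2 * (p + 1))) * (1 + β) * (z' * (1-ε) * z ^ (1-ε-1))
        - k * (δ - 1) * (z' * δ * z ^ (δ-1))) β := by
    have hl : HasDerivAt (fun b : ℝ => K * (1 - ε - (2 - ε) / (2 * (p + 1))) * (1 + b))
        (K * (1 - ε - (2 - ε) / (2 * (p + 1)))) β := by
      have := ((hasDerivAt_id β).const_add (1:ℝ)).const_mul
        (K * (1 - ε - (2 - ε) / (2 * (p + 1))))
      simpa using this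
    have := (hl.mul hA').sub ((hB'.const_mul (k*(δ-1))).const_add (-κ₀))
    exact this
  have hmem : Set.Ico (0:ℝ) 1 ∈ nhdsWithin β (Set.Ici (0:ℝ)) := by
    rw [mem_nhdsWithin]
    exact ⟨Set.Iio 1, isOpen_Iio, hβ1, by rw [Set.inter_comm]; exact Set.Ico_subset_Ico_right le_rfl⟩
  have hGz : ∀ b ∈ Set.Ico (0:ℝ) 1,
      (K * (1 - ε - (2 - ε) / (2 * (p + 1))) * (1 + b) * (zp b) ^ (1 - ε)
        - (-κ₀ + k * (δ - 1) * (zp b) ^ δ)) = 0 := by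
    intro b hb
    have := (hzp b hb).2
    linarith
  have hu : UniqueDiffWithinAt ℝ (Set.Ici (0:ℝ)) β := uniqueDiffOn_Ici 0 β (Set.mem_Ici.mpr hβ0)
  have hG0 : HasDerivWithinAt (fun b : ℝ =>
      K * (1 - ε - (2 - ε) / (2 * (p + 1))) * (1 + b) * (zp b) ^ (1 - ε)
        - (-κ₀ + k * (δ - 1) * (zp b) ^ δ)) 0 (Set.Ici (0:ℝ)) β := by
    refine (hasDerivWithinAt_const β _ (0:ℝ)).congr_of_eventuallyEq ?_ (hGz β ⟨hβ0, hβ1⟩)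
    filter_upwards [hmem] with b hb
    exact hGz b hb
  have himp : K * (1 - ε - (2 - ε) / (2 * (p + 1))) * z ^ (1-ε)
        + K * (1 - ε - (2 - ε) / (2 * (p + 1))) * (1 + β) * (z' * (1-ε) * z ^ (1-ε-1))
        - k * (δ - 1) * (z' * δ * z ^ (δ-1)) = 0 := by
    have h1 := (hG.hasDerivWithinAt (s := Set.Ici (0:ℝ))).derivWithin hu
    have h2 := hG0.derivWithin hu
    rw [h2] at h1
    exact h1.symm
  -- power identities
  have e1 : z ^ (1-ε-1) = z ^ (1-ε) / z := by
    rw [show (1-ε-1:ℝ) = (1-ε) - 1 by ring, Real.rpow_sub hz, Real.rpow_one]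
  have e2 : z ^ (δ-1) = z ^ δ / z := by
    rw [Real.rpow_sub hz, Real.rpow_one]
  have e3 : z ^ (-ε) = z ^ (1-ε) / z := by
    rw [show (-ε:ℝ) = (1-ε) - 1 by ring, Real.rpow_sub hz, Real.rpow_one]
  have e4 : z ^ (-ε-1) = z ^ (1-ε) / z / z := by
    rw [show (-ε-1:ℝ) = (1-ε) - 1 - 1 by ring, Real.rpow_sub hz, Real.rpow_sub hz,
      Real.rpow_one]
  rw [e1, e2] at himp
  rw [hF.deriv, e3, e4, e2]
  set A := z ^ (1-ε) with hAdef
  set B := z ^ δ with hBdef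
  have hA0 : 0 < A := Real.rpow_pos_of_pos hz _
  have hB0 : 0 < B := Real.rpow_pos_of_pos hz _
  set al := 1 - ε - (2 - ε) / (2 * (p + 1)) with hal
  have hp1 : (0:ℝ) < p + 1 := by linarith
  have hal2 : al = (2*p - 2*p*ε - ε) / (2*(p+1)) := by
    rw [hal]; field_simp; ring
  clear_value al
  clear_value z z' A B
  set D := k*(δ-1)*B*(δ+ε-1) + (1-ε)*κ₀ with hDdef
  clear_value D
  have hD : 0 < D := by
    have h1 : 0 < k*(δ-1)*B*(δ+ε-1) := by
      apply mul_pos (mul_pos (mul_pos hk (by linarith)) hB0) (by linarith)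
    nlinarith [mul_nonneg (by linarith : (0:ℝ) ≤ 1 - ε) hκ.le]
  have himp2 : z' * D = K * al * A * z := by
    field_simp at himp
    linear_combination -himp + (1 - ε) * z' * heq + z' * hDdef
  clear hz'def hzdef hzp' hA' hB' hN' hF hG hG0 hGz hzp hdiff hzd hmem hu h1 hα
  have hc0 : 0 ≤ p*(2-ε)/(p+1) := div_nonneg (by nlinarith) hp1.le
  have key2 : 0 ≤ D - (p*(2-ε)/(p+1)) * (K * al * (1 + β) * A) := by
    rcases hcase with h | ⟨h1, h2⟩
    · have hal0 : al ≤ 0 := by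
        rw [hal2]; exact div_nonpos_of_nonpos_of_nonneg h (by linarith)
      have hE : K * al * (1 + β) * A ≤ 0 := by
        have h3 : K * al ≤ 0 := mul_nonpos_of_nonneg_of_nonpos hK.le hal0
        exact mul_nonpos_of_nonpos_of_nonneg
          (mul_nonpos_of_nonpos_of_nonneg h3 (by linarith)) hA0.le
      nlinarith [mul_nonneg hc0 (neg_nonneg.mpr hE)]
    · have hde : (0:ℝ) < δ + ε - 1 := by linarith
      have hal0 : 0 < al := by
        rw [hal2]; exact div_pos h1 (by linarith)
      have hE : 0 ≤ K * al * (1 + β) * A :=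
        le_of_lt (mul_pos (mul_pos (mul_pos hK hal0) (by linarith)) hA0)
      have hc : p*(2-ε)/(p+1) ≤ δ + ε - 1 := by
        rw [div_le_iff₀ hp1]
        have := (div_le_one (by positivity : (0:ℝ) < (p+1)*(δ+ε-1))).mp h2
        linarith
      have h7 := mul_le_mul_of_nonneg_right hc hE
      have h9 : D - (δ+ε-1) * (K * al * (1 + β) * A) = δ * κ₀ := by
        rw [hDdef, heq]; ring
      nlinarith [mul_pos (by linarith : (0:ℝ) < δ) hκ]
  have key : 0 ≤ z - z' * ((1+β) * (p*(2-ε)/(p+1))) := by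
    have h6 : (z - z' * ((1+β) * (p*(2-ε)/(p+1)))) * D
        = z * (D - (p*(2-ε)/(p+1)) * (K * al * (1 + β) * A)) := by
      linear_combination (-(1+β) * (p*(2-ε)/(p+1))) * himp2
    nlinarith [mul_nonneg hz.le key2, hD]
  have hXeq : K / 2 * (A / z) + K * (1 + β) / 2 * (z' * (-ε) * (A / z / z)) -
        ((k * (z' * δ * (B / z))) * z - (κ₀ + k * B) * z') / z ^ 2
      = K * A / (2 * z^2) * (z - z' * ((1+β) * (p*(2-ε)/(p+1)))) := by
    have heq2 : K * (2*p - 2*p*ε - ε) * (1 + β) * A = 2*(p+1)*(-κ₀ + k*(δ-1)*B) := by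
      rw [hal2] at heq
      field_simp at heq
      linear_combination heq
    field_simp
    linear_combination z' * heq2
  rw [hXeq]
  exact mul_nonneg (by positivity) key
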